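/- There exists a sequence (μₙ) in 𝒫₂(ℝ) that converges to δ₀ in the 2-Wasserstein metric (hence is relatively compact) but has no upper bound and no lower bound in 𝒫₂(ℝ) with respect to the stochastic order. Concretely, μₙ = (1/(n² log n)) δ₋ₙ + (1 − 2/(n² log n)) δ₀ + (1/(n² log n)) δₙ for n ≥ 3 satisfies 𝒲₂(μₙ, δ₀)² = 2/log n → 0, but ∫₀^∞ (sup_n μₙ((u,∞))) u du = ∞. -/

import Mathlib

open MeasureTheory Filter Set ENNReal

noncomputable section

/-- The stochastic order on measures on ℝ: `μ ≤_st ν` iff `∫ f dμ ≤ ∫ f dν`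
for every bounded increasing function `f : ℝ → ℝ`. -/
def StOrder (μ ν : Measure ℝ) : Prop :=
  ∀ f : ℝ → ℝ, Monotone f → (∃ C : ℝ, ∀ x, |f x| ≤ C) →
    ∫ x, f x ∂μ ≤ ∫ x, f x ∂ν

/-- `𝒫₂(ℝ)`: probability measures on ℝ with finite second moment. -/
def P2 : Set (Measure ℝ) :=
  {μ | IsProbabilityMeasure μ ∧ Integrable (fun x : ℝ => x ^ 2) μ}

/-- The `p`-Wasserstein distance (ENNReal-valued), as an infimum over couplings. -/
def Wp (p : ℝ) (μ ν : Measure ℝ) : ℝ≥0∞ :=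
  ⨅ (π : Measure (ℝ × ℝ)) (_ : π.map Prod.fst = μ) (_ : π.map Prod.snd = ν),
    (∫⁻ q, ENNReal.ofReal (|q.1 - q.2| ^ p) ∂π) ^ (1 / p)

/-- The 2-Wasserstein distance. -/
def W2 (μ ν : Measure ℝ) : ℝ≥0∞ := Wp 2 μ ν

/-- Convergence of a sequence of measures in the 2-Wasserstein distance. -/
def W2Tendsto (μs : ℕ → Measure ℝ) (μ : Measure ℝ) : Prop :=
  Tendsto (fun n => W2 (μs n) μ) atTop (nhds 0)

/-- The sequence `μₙ = (1/(n² log n)) δ₋ₙ + (1 − 2/(n² log n)) δ₀ + (1/(n² log n)) δₙ`. -/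
def seqMu (n : ℕ) : Measure ℝ :=
  (ENNReal.ofReal (1 / ((n : ℝ) ^ 2 * Real.log n))) • Measure.dirac (-(n : ℝ)) +
  (ENNReal.ofReal (1 - 2 / ((n : ℝ) ^ 2 * Real.log n))) • Measure.dirac (0 : ℝ) +
  (ENNReal.ofReal (1 / ((n : ℝ) ^ 2 * Real.log n))) • Measure.dirac (n : ℝ)

/-! ### Auxiliary elementary lemmas -/

lemma log_ge_one {x : ℝ} (hx : 3 ≤ x) : 1 ≤ Real.log x := by
  rw [Real.le_log_iff_exp_le (by linarith)]
  have h1 : Real.exp 1 ≤ 2.7182818286 := Real.exp_one_lt_d9.le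
  have h2 : (2.7182818286 : ℝ) ≤ 3 := by norm_num
  linarith

lemma A_ge_nine {n : ℕ} (hn : 3 ≤ n) : 9 ≤ (n : ℝ) ^ 2 * Real.log n := by
  have h3 : (3:ℝ) ≤ (n:ℝ) := by exact_mod_cast hn
  have hl : 1 ≤ Real.log n := log_ge_one h3
  nlinarith

lemma not_summable_base : ¬ Summable (fun n : ℕ => 1 / (2 * (((n:ℝ) + 4) * Real.log ((n:ℝ) + 4)))) := by
  intro h
  have hnn : ∀ n : ℕ, (0:ℝ) ≤ 1 / (2 * (((n:ℝ) + 4) * Real.log ((n:ℝ) + 4))) := by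
    intro n
    have h1 : 1 ≤ Real.log ((n:ℝ) + 4) := log_ge_one (by linarith [Nat.cast_nonneg (α := ℝ) n])
    positivity
  have hmono : ∀ ⦃m n : ℕ⦄, 0 < m → m ≤ n →
      1 / (2 * (((n:ℝ) + 4) * Real.log ((n:ℝ) + 4))) ≤
      1 / (2 * (((m:ℝ) + 4) * Real.log ((m:ℝ) + 4))) := by
    intro m n _ hmn
    have hmn' : (m:ℝ) ≤ (n:ℝ) := by exact_mod_cast hmn
    have hm0 : (0:ℝ) ≤ (m:ℝ) := Nat.cast_nonneg m
    have h1 : 1 ≤ Real.log ((m:ℝ) + 4) := log_ge_one (by linarith)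
    have h2 : Real.log ((m:ℝ) + 4) ≤ Real.log ((n:ℝ) + 4) :=
      Real.log_le_log (by linarith) (by linarith)
    gcongr
  rw [← summable_condensed_iff_of_nonneg hnn hmono] at h
  have hcomp : Summable (fun k : ℕ => 1 / (32 * Real.log 2 * ((k:ℝ) + 3))) := by
    apply h.of_nonneg_of_le
    · intro k
      have hlog2 : (0:ℝ) < Real.log 2 := Real.log_pos (by norm_num)
      positivity
    intro k
    have hk1 : (1:ℝ) ≤ 2 ^ k := one_le_pow₀ (by norm_num)
    have hle : (2:ℝ) ^ k + 4 ≤ 8 * 2 ^ k := by nlinarith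
    have hlog2 : (0:ℝ) < Real.log 2 := Real.log_pos (by norm_num)
    have hlog : Real.log ((2:ℝ) ^ k + 4) ≤ ((k:ℝ) + 3) * Real.log 2 := by
      calc Real.log ((2:ℝ) ^ k + 4) ≤ Real.log ((2:ℝ) ^ (k + 3)) := by
            apply Real.log_le_log (by positivity)
            rw [pow_add]; norm_num; linarith
        _ = ((k:ℝ) + 3) * Real.log 2 := by
            rw [Real.log_pow]; push_cast; ring
    have hlogpos : (0:ℝ) < Real.log ((2:ℝ) ^ k + 4) := Real.log_pos (by nlinarith)
    have goal2 : 1 / (32 * Real.log 2 * ((k:ℝ) + 3)) ≤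
        (2:ℝ) ^ k / (2 * (((2:ℝ) ^ k + 4) * Real.log ((2:ℝ) ^ k + 4))) := by
      rw [div_le_div_iff₀ (by positivity) (by positivity)]
      have hkey : ((2:ℝ) ^ k + 4) * Real.log ((2:ℝ) ^ k + 4) ≤
          (8 * 2 ^ k) * (((k:ℝ) + 3) * Real.log 2) :=
        mul_le_mul hle hlog hlogpos.le (by positivity)
      nlinarith
    calc 1 / (32 * Real.log 2 * ((k:ℝ) + 3))
        ≤ (2:ℝ) ^ k / (2 * (((2:ℝ) ^ k + 4) * Real.log ((2:ℝ) ^ k + 4))) := goal2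
      _ = (2:ℝ) ^ k * (1 / (2 * ((((2 ^ k : ℕ)):ℝ) + 4) * Real.log ((((2 ^ k : ℕ)):ℝ) + 4))) := by
          push_cast; ring
      _ = (2:ℝ) ^ k * (1 / (2 * (((((2 ^ k : ℕ)):ℝ) + 4) * Real.log ((((2 ^ k : ℕ)):ℝ) + 4)))) := by
          ring
  have h2 : Summable (fun k : ℕ => 1 / ((k:ℝ) + 3)) := by
    have h' := hcomp.mul_left (32 * Real.log 2)
    apply h'.congr
    intro k
    have hlog2 : (0:ℝ) < Real.log 2 := Real.log_pos (by norm_num)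
    have hk : (0:ℝ) < (k:ℝ) + 3 := by positivity
    field_simp
  have h3 : Summable (fun k : ℕ => 1 / ((k:ℝ))) := by
    apply (summable_nat_add_iff 3).mp
    apply h2.congr
    intro k
    push_cast
    ring_nf
  exact Real.not_summable_one_div_natCast h3

lemma tsum_top (c : ℕ → ℝ≥0∞)
    (hc : ∀ n : ℕ, ENNReal.ofReal (1 / (2 * (((n:ℝ) + 4) * Real.log ((n:ℝ) + 4)))) ≤ c n) :
    ∑' n, c n = ⊤ := by
  by_contra h
  have hlt : ∑' (n : ℕ), ENNReal.ofReal (1 / (2 * (((n:ℝ) + 4) * Real.log ((n:ℝ) + 4)))) ≠ ⊤ :=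
    fun htop => h (top_le_iff.mp (htop ▸ ENNReal.tsum_le_tsum hc))
  have hsum := ENNReal.summable_toReal hlt
  apply not_summable_base
  apply hsum.congr
  intro n
  rw [ENNReal.toReal_ofReal]
  have h1 : 1 ≤ Real.log ((n:ℝ) + 4) := log_ge_one (by linarith [Nat.cast_nonneg (α := ℝ) n])
  positivity

lemma lintegral_Ioi_top (g : ℝ → ℝ≥0∞)
    (hg : ∀ n : ℕ, ∀ t ∈ Ico ((n:ℝ) + 2) ((n:ℝ) + 3),
      ENNReal.ofReal (1 / (2 * (((n:ℝ) + 4) * Real.log ((n:ℝ) + 4)))) ≤ g t) :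
    ∫⁻ t in Ioi (0:ℝ), g t = ⊤ := by
  have hsub : (⋃ n : ℕ, Ico ((n:ℝ) + 2) ((n:ℝ) + 3)) ⊆ Ioi 0 := by
    rintro t ht
    simp only [mem_iUnion, mem_Ico] at ht
    obtain ⟨n, h1, h2⟩ := ht
    have : (0:ℝ) ≤ (n:ℝ) := Nat.cast_nonneg n
    exact mem_Ioi.mpr (by linarith)
  have hdisj : Pairwise (Function.onFun Disjoint fun n : ℕ => Ico ((n:ℝ) + 2) ((n:ℝ) + 3)) := by
    intro i j hij
    simp only [Function.onFun]
    rw [Set.Ico_disjoint_Ico]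
    rcases lt_or_gt_of_ne hij with h | h
    · have hij' : (i:ℝ) + 1 ≤ (j:ℝ) := by exact_mod_cast h
      calc min ((i:ℝ) + 3) ((j:ℝ) + 3) ≤ (i:ℝ) + 3 := min_le_left _ _
        _ ≤ (j:ℝ) + 2 := by linarith
        _ ≤ max ((i:ℝ) + 2) ((j:ℝ) + 2) := le_max_right _ _
    · have hij' : (j:ℝ) + 1 ≤ (i:ℝ) := by exact_mod_cast h
      calc min ((i:ℝ) + 3) ((j:ℝ) + 3) ≤ (j:ℝ) + 3 := min_le_right _ _
        _ ≤ (i:ℝ) + 2 := by linarith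
        _ ≤ max ((i:ℝ) + 2) ((j:ℝ) + 2) := le_max_left _ _
  have key : (⊤ : ℝ≥0∞) ≤ ∫⁻ t in Ioi (0:ℝ), g t := by
    calc (⊤ : ℝ≥0∞) = ∑' n : ℕ, ENNReal.ofReal (1 / (2 * (((n:ℝ) + 4) * Real.log ((n:ℝ) + 4)))) := by
          refine (tsum_top _ (fun n => le_rfl)).symm
      _ ≤ ∑' n : ℕ, ∫⁻ t in Ico ((n:ℝ) + 2) ((n:ℝ) + 3), g t := by
          apply ENNReal.tsum_le_tsum
          intro n
          calc ENNReal.ofReal (1 / (2 * (((n:ℝ) + 4) * Real.log ((n:ℝ) + 4))))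
              = ENNReal.ofReal (1 / (2 * (((n:ℝ) + 4) * Real.log ((n:ℝ) + 4)))) *
                volume (Ico ((n:ℝ) + 2) ((n:ℝ) + 3)) := by
                rw [Real.volume_Ico]
                norm_num
            _ = ∫⁻ _ in Ico ((n:ℝ) + 2) ((n:ℝ) + 3),
                  ENNReal.ofReal (1 / (2 * (((n:ℝ) + 4) * Real.log ((n:ℝ) + 4)))) := by
                rw [setLIntegral_const]
            _ ≤ ∫⁻ t in Ico ((n:ℝ) + 2) ((n:ℝ) + 3), g t :=
                setLIntegral_mono' measurableSet_Ico (hg n)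
      _ = ∫⁻ t in ⋃ n : ℕ, Ico ((n:ℝ) + 2) ((n:ℝ) + 3), g t :=
          (lintegral_iUnion (fun _ => measurableSet_Ico) hdisj g).symm
      _ ≤ ∫⁻ t in Ioi (0:ℝ), g t := lintegral_mono_set hsub
  exact top_le_iff.mp key

/-! ### Basic properties of `seqMu` -/

lemma coeff_pos {n : ℕ} (hn : 3 ≤ n) : 0 < 1 / ((n : ℝ) ^ 2 * Real.log n) := by
  have := A_ge_nine hn; positivity

lemma coeff2_nonneg {n : ℕ} (hn : 3 ≤ n) : 0 ≤ 1 - 2 / ((n : ℝ) ^ 2 * Real.log n) := by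
  have h9 := A_ge_nine hn
  have h2 : 2 / ((n : ℝ) ^ 2 * Real.log n) ≤ 2 / 9 := by
    apply div_le_div_of_nonneg_left (by norm_num) (by norm_num) h9
  linarith

lemma seqMu_prob (n : ℕ) (hn : 3 ≤ n) : IsProbabilityMeasure (seqMu n) := by
  constructor
  have ha : 0 ≤ 1 / ((n : ℝ) ^ 2 * Real.log n) := (coeff_pos hn).le
  have hb := coeff2_nonneg hn
  simp only [seqMu, Measure.add_apply, Measure.smul_apply, smul_eq_mul,
    Measure.dirac_apply_of_mem (mem_univ _), mul_one]
  rw [← ENNReal.ofReal_add ha hb, ← ENNReal.ofReal_add (by linarith) ha]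
  have h9 := A_ge_nine hn
  have hA : ((n:ℝ) ^ 2 * Real.log n) ≠ 0 := by positivity
  rw [show 1 / ((n : ℝ) ^ 2 * Real.log n) + (1 - 2 / ((n : ℝ) ^ 2 * Real.log n)) +
      1 / ((n : ℝ) ^ 2 * Real.log n) = 1 by field_simp; ring]
  exact ENNReal.ofReal_one

lemma integrable_seqMu (n : ℕ) (f : ℝ → ℝ) (hf : Measurable f) : Integrable f (seqMu n) := by
  have key : ∀ (c : ℝ≥0∞) (x : ℝ), c ≠ ⊤ → Integrable f (c • Measure.dirac x) := by
    intro c x hc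
    refine ⟨hf.aestronglyMeasurable, ?_⟩
    unfold HasFiniteIntegral
    rw [lintegral_smul_measure, lintegral_dirac]
    exact ENNReal.mul_lt_top hc.lt_top (by simp)
  exact (((key _ _ ofReal_ne_top).add_measure (key _ _ ofReal_ne_top)).add_measure
    (key _ _ ofReal_ne_top))

lemma integral_seqMu (n : ℕ) (hn : 3 ≤ n) (f : ℝ → ℝ) (hf : Measurable f) :
    ∫ x, f x ∂(seqMu n) = (1 / ((n : ℝ) ^ 2 * Real.log n)) * f (-(n : ℝ)) +
      (1 - 2 / ((n : ℝ) ^ 2 * Real.log n)) * f 0 +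
      (1 / ((n : ℝ) ^ 2 * Real.log n)) * f (n : ℝ) := by
  have hi : ∀ (c : ℝ≥0∞) (x : ℝ), c ≠ ⊤ → Integrable f (c • Measure.dirac x) := by
    intro c x hc
    refine ⟨hf.aestronglyMeasurable, ?_⟩
    unfold HasFiniteIntegral
    rw [lintegral_smul_measure, lintegral_dirac]
    exact ENNReal.mul_lt_top hc.lt_top (by simp)
  rw [seqMu, integral_add_measure ((hi _ _ ofReal_ne_top).add_measure (hi _ _ ofReal_ne_top))
      (hi _ _ ofReal_ne_top),
    integral_add_measure (hi _ _ ofReal_ne_top) (hi _ _ ofReal_ne_top)]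
  rw [integral_smul_measure, integral_smul_measure, integral_smul_measure,
    integral_dirac, integral_dirac, integral_dirac]
  rw [ENNReal.toReal_ofReal (coeff_pos hn).le, ENNReal.toReal_ofReal (coeff2_nonneg hn)]
  simp [smul_eq_mul]

lemma lintegral_seqMu (n : ℕ) (g : ℝ → ℝ≥0∞) :
    ∫⁻ x, g x ∂(seqMu n) = (ENNReal.ofReal (1 / ((n : ℝ) ^ 2 * Real.log n))) * g (-(n : ℝ)) +
      (ENNReal.ofReal (1 - 2 / ((n : ℝ) ^ 2 * Real.log n))) * g 0 +
      (ENNReal.ofReal (1 / ((n : ℝ) ^ 2 * Real.log n))) * g (n : ℝ) := by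
  rw [seqMu, lintegral_add_measure, lintegral_add_measure,
    lintegral_smul_measure, lintegral_smul_measure, lintegral_smul_measure,
    lintegral_dirac, lintegral_dirac, lintegral_dirac]
  simp only [smul_eq_mul]

lemma seqMu_tail (n : ℕ) {t : ℝ} (ht : t < n) :
    ENNReal.ofReal (1 / ((n : ℝ) ^ 2 * Real.log n)) ≤ seqMu n (Ioi t) := by
  calc ENNReal.ofReal (1 / ((n : ℝ) ^ 2 * Real.log n))
      = ENNReal.ofReal (1 / ((n : ℝ) ^ 2 * Real.log n)) * Measure.dirac (n:ℝ) (Ioi t) := by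
        rw [Measure.dirac_apply_of_mem (mem_Ioi.mpr ht), mul_one]
    _ ≤ seqMu n (Ioi t) := by
        rw [seqMu, Measure.add_apply, Measure.smul_apply, smul_eq_mul]
        exact le_add_self

/-! ### The Wasserstein distance computation -/

lemma lint_sq (n : ℕ) (hn : 3 ≤ n) :
    ∫⁻ x, ENNReal.ofReal (|x| ^ (2:ℝ)) ∂(seqMu n) = ENNReal.ofReal (2 / Real.log n) := by
  have habs : ∀ x : ℝ, |x| ^ (2:ℝ) = x ^ 2 := by
    intro x
    rw [show (2:ℝ) = ((2:ℕ):ℝ) by norm_num, Real.rpow_natCast, sq_abs]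
  have h9 := A_ge_nine hn
  have ha : (0:ℝ) ≤ 1 / ((n : ℝ) ^ 2 * Real.log n) := by positivity
  have hc : (0:ℝ) ≤ 1 / ((n : ℝ) ^ 2 * Real.log n) * (n:ℝ) ^ 2 :=
    mul_nonneg ha (sq_nonneg _)
  rw [lintegral_seqMu]
  simp only [habs, neg_sq]
  rw [show ((0:ℝ)^2) = 0 by norm_num, ENNReal.ofReal_zero, mul_zero, add_zero,
    ← ENNReal.ofReal_mul ha, ← ENNReal.ofReal_add hc hc]
  congr 1
  have hn0 : ((n:ℝ)) ≠ 0 := by positivity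
  have h3 : (3:ℝ) ≤ (n:ℝ) := by exact_mod_cast hn
  have hl : Real.log n ≠ 0 := by have := log_ge_one h3; linarith
  field_simp
  ring

lemma W2_eq (n : ℕ) (hn : 3 ≤ n) :
    W2 (seqMu n) (Measure.dirac 0) = (ENNReal.ofReal (2 / Real.log n)) ^ ((1:ℝ)/2) := by
  have hF : Measurable (fun x : ℝ => ENNReal.ofReal (|x| ^ (2:ℝ))) := by
    apply ENNReal.measurable_ofReal.comp
    exact (measurable_id.abs).pow_const _
  have hval : ∀ π : Measure (ℝ × ℝ), π.map Prod.fst = seqMu n →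
      π.map Prod.snd = Measure.dirac 0 →
      ∫⁻ q, ENNReal.ofReal (|q.1 - q.2| ^ (2:ℝ)) ∂π = ENNReal.ofReal (2 / Real.log n) := by
    intro π h1 h2
    have hae : ∀ᵐ q ∂π, (q : ℝ × ℝ).2 = 0 := by
      rw [ae_iff]
      have hset : {q : ℝ × ℝ | ¬ q.2 = 0} = Prod.snd ⁻¹' ({(0:ℝ)}ᶜ) := rfl
      rw [hset, ← Measure.map_apply measurable_snd (measurableSet_singleton (0:ℝ)).compl, h2]
      simp
    have e1 : ∫⁻ q, ENNReal.ofReal (|q.1 - q.2| ^ (2:ℝ)) ∂π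
        = ∫⁻ q, ENNReal.ofReal (|(q : ℝ × ℝ).1| ^ (2:ℝ)) ∂π := by
      apply lintegral_congr_ae
      filter_upwards [hae] with q hq
      rw [hq, sub_zero]
    have e2 : ∫⁻ q, ENNReal.ofReal (|(q : ℝ × ℝ).1| ^ (2:ℝ)) ∂π
        = ∫⁻ x, ENNReal.ofReal (|x| ^ (2:ℝ)) ∂(π.map Prod.fst) := by
      rw [lintegral_map hF measurable_fst]
    rw [e1, e2, h1, lint_sq n hn]
  have hme : Measurable (fun x : ℝ => (x, (0:ℝ))) := measurable_id.prodMk measurable_const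
  set π₀ : Measure (ℝ × ℝ) := (seqMu n).map (fun x => (x, (0:ℝ))) with hπ₀
  have h01 : π₀.map Prod.fst = seqMu n := by
    rw [hπ₀, Measure.map_map measurable_fst hme]
    have : (Prod.fst ∘ fun x : ℝ => (x, (0:ℝ))) = id := rfl
    rw [this, Measure.map_id]
  have h02 : π₀.map Prod.snd = Measure.dirac 0 := by
    rw [hπ₀, Measure.map_map measurable_snd hme]
    have : (Prod.snd ∘ fun x : ℝ => (x, (0:ℝ))) = fun _ => (0:ℝ) := rfl
    rw [this, Measure.map_const]
    haveI := seqMu_prob n hn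
    simp
  unfold W2 Wp
  apply le_antisymm
  · refine iInf_le_of_le π₀ (iInf_le_of_le h01 (iInf_le_of_le h02 ?_))
    rw [hval π₀ h01 h02]
  · refine le_iInf fun π => le_iInf fun h1 => le_iInf fun h2 => ?_
    rw [hval π h1 h2]

/-! ### The tail lemma -/

lemma tail_false (ν : Measure ℝ) (hp : IsProbabilityMeasure ν)
    (hi : Integrable (fun x : ℝ => x ^ 2) ν)
    (h : ∀ n : ℕ, 3 ≤ n →
      ENNReal.ofReal (1 / ((n:ℝ) ^ 2 * Real.log n)) ≤ ν (Ici ((n:ℝ) - 1))) : False := by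
  have f_mble : AEMeasurable (fun ω : ℝ => max ω 0) ν :=
    (measurable_id.max measurable_const).aemeasurable
  have key := lintegral_comp_eq_lintegral_meas_le_mul ν
    (Filter.Eventually.of_forall (fun ω => le_max_right ω 0)) f_mble
    (fun t _ => Continuous.intervalIntegrable (by continuity : Continuous fun s : ℝ => 2 * s) 0 t)
    (by
      filter_upwards [self_mem_ae_restrict measurableSet_Ioi] with t ht
      have : (0:ℝ) < t := ht
      linarith)
  have hint : ∀ b : ℝ, (∫ t in (0:ℝ)..b, 2 * t) = b ^ 2 := by
    intro b
    rw [intervalIntegral.integral_const_mul, integral_id]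
    ring
  simp only [hint] at key
  have hfin : ∫⁻ ω, ENNReal.ofReal ((max ω 0) ^ 2) ∂ν < ⊤ := by
    have hle : ∀ ω : ℝ, ENNReal.ofReal ((max ω 0) ^ 2) ≤ (‖ω ^ 2‖₊ : ℝ≥0∞) := by
      intro ω
      rw [← enorm_eq_nnnorm, Real.enorm_eq_ofReal (sq_nonneg ω)]
      apply ENNReal.ofReal_le_ofReal
      rcases le_total ω 0 with hω | hω
      · rw [max_eq_right hω]; simpa using sq_nonneg ω
      · rw [max_eq_left hω]
    calc ∫⁻ ω, ENNReal.ofReal ((max ω 0) ^ 2) ∂ν ≤ ∫⁻ ω, (‖ω ^ 2‖₊ : ℝ≥0∞) ∂ν :=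
          lintegral_mono hle
      _ < ⊤ := hi.2
  rw [key] at hfin
  have htop : ∫⁻ t in Ioi (0:ℝ), ν {a : ℝ | t ≤ max a 0} * ENNReal.ofReal (2 * t) = ⊤ := by
    apply lintegral_Ioi_top
    intro n t ht
    obtain ⟨ht1, ht2⟩ := ht
    have hn0 : (0:ℝ) ≤ (n:ℝ) := Nat.cast_nonneg n
    have hmono : ν (Ici ((n:ℝ) + 3)) ≤ ν {a : ℝ | t ≤ max a 0} := by
      apply measure_mono
      intro a ha
      have haa : (n:ℝ) + 3 ≤ a := ha
      simp only [mem_setOf_eq]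
      calc t ≤ a := by linarith
        _ ≤ max a 0 := le_max_left a 0
    have hcast : (((n + 4 : ℕ)):ℝ) = (n:ℝ) + 4 := by push_cast; ring
    have htail := h (n + 4) (by omega)
    rw [hcast] at htail
    have htail' : ENNReal.ofReal (1 / (((n:ℝ) + 4) ^ 2 * Real.log ((n:ℝ) + 4)))
        ≤ ν (Ici ((n:ℝ) + 3)) := by
      convert htail using 3
      ring
    have hlog : 1 ≤ Real.log ((n:ℝ) + 4) := log_ge_one (by linarith)
    calc ENNReal.ofReal (1 / (2 * (((n:ℝ) + 4) * Real.log ((n:ℝ) + 4))))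
        ≤ ENNReal.ofReal (1 / (((n:ℝ) + 4) ^ 2 * Real.log ((n:ℝ) + 4)) * (2 * ((n:ℝ) + 2))) := by
          apply ENNReal.ofReal_le_ofReal
          have hlp : (0:ℝ) < Real.log ((n:ℝ) + 4) := by linarith
          have hD : (0:ℝ) < 2 * (((n:ℝ) + 4) * Real.log ((n:ℝ) + 4)) :=
            mul_pos two_pos (mul_pos (by linarith) hlp)
          have hE : (0:ℝ) < ((n:ℝ) + 4) ^ 2 * Real.log ((n:ℝ) + 4) :=
            mul_pos (by positivity) hlp
          have hre : 1 / (((n:ℝ) + 4) ^ 2 * Real.log ((n:ℝ) + 4)) * (2 * ((n:ℝ) + 2))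
              = (2 * ((n:ℝ) + 2)) / (((n:ℝ) + 4) ^ 2 * Real.log ((n:ℝ) + 4)) := by ring
          rw [hre, div_le_div_iff₀ hD hE]
          have hq : ((n:ℝ) + 4) ^ 2 ≤ 4 * (((n:ℝ) + 2) * ((n:ℝ) + 4)) := by nlinarith
          nlinarith [mul_le_mul_of_nonneg_right hq hlp.le]
      _ = ENNReal.ofReal (1 / (((n:ℝ) + 4) ^ 2 * Real.log ((n:ℝ) + 4)))
            * ENNReal.ofReal (2 * ((n:ℝ) + 2)) := by
          rw [ENNReal.ofReal_mul (by positivity)]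
      _ ≤ ν {a : ℝ | t ≤ max a 0} * ENNReal.ofReal (2 * t) := by
          apply mul_le_mul' (htail'.trans hmono)
          apply ENNReal.ofReal_le_ofReal
          linarith
  rw [htop] at hfin
  exact absurd hfin (lt_irrefl ⊤)

/-! ### Stochastic-order tail bounds -/

lemma bounded_integrable (ν : Measure ℝ) [IsFiniteMeasure ν] (f : ℝ → ℝ) (hf : Measurable f)
    (C : ℝ) (hb : ∀ x, |f x| ≤ C) : Integrable f ν := by
  refine Integrable.mono' (integrable_const C) hf.aestronglyMeasurable ?_
  filter_upwards with x
  rw [Real.norm_eq_abs]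
  exact hb x

lemma upper_tail (ν : Measure ℝ) (hp : IsProbabilityMeasure ν) (n : ℕ) (hn : 3 ≤ n)
    (hst : StOrder (seqMu n) ν) :
    ENNReal.ofReal (1 / ((n:ℝ) ^ 2 * Real.log n)) ≤ ν (Ici ((n:ℝ) - 1)) := by
  have h3 : (3:ℝ) ≤ (n:ℝ) := by exact_mod_cast hn
  set f : ℝ → ℝ := fun x => min (max (x - ((n:ℝ) - 1)) 0) 1 with hf
  have hmono : Monotone f := by
    have hsub : Monotone (fun x : ℝ => x - ((n:ℝ) - 1)) := fun a b h => sub_le_sub_right h _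
    exact (hsub.max monotone_const).min monotone_const
  have hbound : ∀ x, |f x| ≤ 1 := by
    intro x
    rw [abs_le]
    constructor
    · have : (0:ℝ) ≤ f x := le_min (le_max_right _ _) zero_le_one
      linarith
    · exact min_le_right _ _
  have hint := hst f hmono ⟨1, hbound⟩
  have hf1 : f (-(n:ℝ)) = 0 := by
    rw [hf]
    simp only
    rw [max_eq_right (by linarith), min_eq_left zero_le_one]
  have hf2 : f 0 = 0 := by
    rw [hf]
    simp only
    rw [max_eq_right (by linarith), min_eq_left zero_le_one]
  have hf3 : f ((n:ℝ)) = 1 := by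
    rw [hf]
    simp only
    rw [max_eq_left (by linarith), min_eq_right (by linarith)]
  have hL : ∫ x, f x ∂(seqMu n) = 1 / ((n:ℝ) ^ 2 * Real.log n) := by
    rw [integral_seqMu n hn f hmono.measurable, hf1, hf2, hf3]
    ring
  have hR : ∫ x, f x ∂ν ≤ (ν (Ici ((n:ℝ) - 1))).toReal := by
    have hle : ∀ x, f x ≤ (Ici ((n:ℝ) - 1)).indicator (fun _ => (1:ℝ)) x := by
      intro x
      by_cases hx : (n:ℝ) - 1 ≤ x
      · rw [indicator_of_mem (show x ∈ Ici ((n:ℝ) - 1) from hx)]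
        exact min_le_right _ _
      · rw [indicator_of_notMem (show x ∉ Ici ((n:ℝ) - 1) from hx)]
        push_neg at hx
        rw [hf]
        simp only
        rw [max_eq_right (by linarith), min_eq_left zero_le_one]
    calc ∫ x, f x ∂ν ≤ ∫ x, (Ici ((n:ℝ) - 1)).indicator (fun _ => (1:ℝ)) x ∂ν := by
          apply integral_mono (bounded_integrable ν f hmono.measurable 1 hbound)
            ((integrable_const 1).indicator measurableSet_Ici) hle
      _ = (ν (Ici ((n:ℝ) - 1))).toReal := by
          rw [integral_indicator_const (1:ℝ) measurableSet_Ici, smul_eq_mul, mul_one]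
          rfl
  have hkey : 1 / ((n:ℝ) ^ 2 * Real.log n) ≤ (ν (Ici ((n:ℝ) - 1))).toReal := by
    rw [← hL]
    exact hint.trans hR
  calc ENNReal.ofReal (1 / ((n:ℝ) ^ 2 * Real.log n))
      ≤ ENNReal.ofReal ((ν (Ici ((n:ℝ) - 1))).toReal) := ENNReal.ofReal_le_ofReal hkey
    _ = ν (Ici ((n:ℝ) - 1)) := ENNReal.ofReal_toReal (measure_ne_top ν _)

lemma lower_tail (ν : Measure ℝ) (hp : IsProbabilityMeasure ν) (n : ℕ) (hn : 3 ≤ n)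
    (hst : StOrder ν (seqMu n)) :
    ENNReal.ofReal (1 / ((n:ℝ) ^ 2 * Real.log n)) ≤ ν (Iic (-((n:ℝ) - 1))) := by
  have h3 : (3:ℝ) ≤ (n:ℝ) := by exact_mod_cast hn
  set f : ℝ → ℝ := fun x => max (min (x + ((n:ℝ) - 1)) 0) (-1) with hf
  have hmono : Monotone f := ((monotone_id.add_const _).min monotone_const).max monotone_const
  have hbound : ∀ x, |f x| ≤ 1 := by
    intro x
    rw [abs_le]
    constructor
    · exact le_max_right _ _
    · have : f x ≤ 0 := max_le (min_le_right _ _) (by norm_num)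
      linarith
  have hint := hst f hmono ⟨1, hbound⟩
  have hf1 : f (-(n:ℝ)) = -1 := by
    rw [hf]
    simp only
    rw [min_eq_left (by linarith), max_eq_right (by linarith)]
  have hf2 : f 0 = 0 := by
    rw [hf]
    simp only
    rw [min_eq_right (by linarith), max_eq_left (by norm_num)]
  have hf3 : f ((n:ℝ)) = 0 := by
    rw [hf]
    simp only
    rw [min_eq_right (by linarith), max_eq_left (by norm_num)]
  have hL : ∫ x, f x ∂(seqMu n) = -(1 / ((n:ℝ) ^ 2 * Real.log n)) := by
    rw [integral_seqMu n hn f hmono.measurable, hf1, hf2, hf3]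
    ring
  have hR : -((ν (Iic (-((n:ℝ) - 1)))).toReal) ≤ ∫ x, f x ∂ν := by
    have hle : ∀ x, (Iic (-((n:ℝ) - 1))).indicator (fun _ => (-1:ℝ)) x ≤ f x := by
      intro x
      by_cases hx : x ≤ -((n:ℝ) - 1)
      · rw [indicator_of_mem (show x ∈ Iic (-((n:ℝ) - 1)) from hx)]
        exact le_max_right _ _
      · rw [indicator_of_notMem (show x ∉ Iic (-((n:ℝ) - 1)) from hx)]
        push_neg at hx
        rw [hf]
        simp only
        rw [min_eq_right (by linarith), max_eq_left (by norm_num)]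
    calc -((ν (Iic (-((n:ℝ) - 1)))).toReal)
        = ∫ x, (Iic (-((n:ℝ) - 1))).indicator (fun _ => (-1:ℝ)) x ∂ν := by
          rw [integral_indicator_const (-1:ℝ) measurableSet_Iic, smul_eq_mul]
          simp only [Measure.real]
          ring
      _ ≤ ∫ x, f x ∂ν := by
          apply integral_mono ((integrable_const (-1)).indicator measurableSet_Iic)
            (bounded_integrable ν f hmono.measurable 1 hbound) hle
  have hkey : 1 / ((n:ℝ) ^ 2 * Real.log n) ≤ (ν (Iic (-((n:ℝ) - 1)))).toReal := by
    have := hR.trans (hint.trans_eq hL)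
    linarith
  calc ENNReal.ofReal (1 / ((n:ℝ) ^ 2 * Real.log n))
      ≤ ENNReal.ofReal ((ν (Iic (-((n:ℝ) - 1)))).toReal) := ENNReal.ofReal_le_ofReal hkey
    _ = ν (Iic (-((n:ℝ) - 1))) := ENNReal.ofReal_toReal (measure_ne_top ν _)

/-! ### Main theorem -/

/-- The sequence `(μₙ)` lies in `𝒫₂(ℝ)`, satisfies
`𝒲₂(μₙ, δ₀)² = 2/log n → 0` (hence is relatively compact), but the right-tail
integrability criterion fails, and it has neither an upper bound nor a lower bound
in `𝒫₂(ℝ)` for the stochastic order. -/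
theorem compact_not_order_bounded :
    (∀ n : ℕ, 3 ≤ n → seqMu n ∈ P2) ∧
    (∀ n : ℕ, 3 ≤ n →
      (W2 (seqMu n) (Measure.dirac 0)) ^ 2 = ENNReal.ofReal (2 / Real.log n)) ∧
    Tendsto (fun n => W2 (seqMu n) (Measure.dirac 0)) atTop (nhds 0) ∧
    (∫⁻ u in Set.Ioi (0:ℝ),
        (⨆ (n : ℕ) (_ : 3 ≤ n), seqMu n (Set.Ioi u)) * ENNReal.ofReal u) = ⊤ ∧
    ¬ (∃ ν ∈ P2, ∀ n : ℕ, 3 ≤ n → StOrder (seqMu n) ν) ∧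
    ¬ (∃ ν ∈ P2, ∀ n : ℕ, 3 ≤ n → StOrder ν (seqMu n)) := by
  refine ⟨?_, ?_, ?_, ?_, ?_, ?_⟩
  · -- part 1
    intro n hn
    exact ⟨seqMu_prob n hn, integrable_seqMu n _ (measurable_id.pow_const 2)⟩
  · -- part 2
    intro n hn
    rw [W2_eq n hn, ← ENNReal.rpow_natCast _ 2, ← ENNReal.rpow_mul]
    norm_num
  · -- part 3
    have hlog_t : Tendsto (fun n : ℕ => Real.log n) atTop atTop :=
      Real.tendsto_log_atTop.comp tendsto_natCast_atTop_atTop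
    have h0 : Tendsto (fun n : ℕ => 2 / Real.log n) atTop (nhds 0) :=
      Tendsto.div_atTop tendsto_const_nhds hlog_t
    have h1 : Tendsto (fun n : ℕ => Real.sqrt (2 / Real.log n)) atTop (nhds 0) := by
      have hc := (Real.continuous_sqrt.tendsto 0).comp h0
      rw [Real.sqrt_zero] at hc
      exact hc
    have h2 : Tendsto (fun n : ℕ => ENNReal.ofReal (Real.sqrt (2 / Real.log n)))
        atTop (nhds 0) := by
      have hc := ENNReal.tendsto_ofReal h1
      rwa [ENNReal.ofReal_zero] at hc
    apply h2.congr'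
    filter_upwards [eventually_ge_atTop 3] with n hn
    have h3 : (3:ℝ) ≤ (n:ℝ) := by exact_mod_cast hn
    have hl : (0:ℝ) ≤ 2 / Real.log n := by
      have := log_ge_one h3
      positivity
    rw [W2_eq n hn, ENNReal.ofReal_rpow_of_nonneg hl (by norm_num), Real.sqrt_eq_rpow]
  · -- part 4
    apply lintegral_Ioi_top
    intro n t ht
    obtain ⟨ht1, ht2⟩ := ht
    have hn0 : (0:ℝ) ≤ (n:ℝ) := Nat.cast_nonneg n
    have hcast : (((n + 3 : ℕ)):ℝ) = (n:ℝ) + 3 := by push_cast; ring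
    have htail := seqMu_tail (n + 3) (t := t) (by rw [hcast]; linarith)
    rw [hcast] at htail
    have hL3 : 1 ≤ Real.log ((n:ℝ) + 3) := log_ge_one (by linarith)
    have hL34 : Real.log ((n:ℝ) + 3) ≤ Real.log ((n:ℝ) + 4) :=
      Real.log_le_log (by linarith) (by linarith)
    calc ENNReal.ofReal (1 / (2 * (((n:ℝ) + 4) * Real.log ((n:ℝ) + 4))))
        ≤ ENNReal.ofReal (1 / (((n:ℝ) + 3) ^ 2 * Real.log ((n:ℝ) + 3)) * ((n:ℝ) + 2)) := by
          apply ENNReal.ofReal_le_ofReal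
          have hD : (0:ℝ) < 2 * (((n:ℝ) + 4) * Real.log ((n:ℝ) + 4)) :=
            mul_pos two_pos (mul_pos (by linarith) (by linarith))
          have hE : (0:ℝ) < ((n:ℝ) + 3) ^ 2 * Real.log ((n:ℝ) + 3) :=
            mul_pos (by positivity) (by linarith)
          have hre : 1 / (((n:ℝ) + 3) ^ 2 * Real.log ((n:ℝ) + 3)) * ((n:ℝ) + 2)
              = ((n:ℝ) + 2) / (((n:ℝ) + 3) ^ 2 * Real.log ((n:ℝ) + 3)) := by ring
          rw [hre, div_le_div_iff₀ hD hE]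
          have hq : ((n:ℝ) + 3) ^ 2 ≤ 2 * (((n:ℝ) + 2) * ((n:ℝ) + 4)) := by nlinarith
          have hkey : ((n:ℝ) + 3) ^ 2 * Real.log ((n:ℝ) + 3)
              ≤ (2 * (((n:ℝ) + 2) * ((n:ℝ) + 4))) * Real.log ((n:ℝ) + 4) :=
            mul_le_mul hq hL34 (by linarith) (by positivity)
          nlinarith
      _ = ENNReal.ofReal (1 / (((n:ℝ) + 3) ^ 2 * Real.log ((n:ℝ) + 3)))
            * ENNReal.ofReal ((n:ℝ) + 2) := by
          rw [ENNReal.ofReal_mul (by positivity)]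
      _ ≤ seqMu (n + 3) (Ioi t) * ENNReal.ofReal t := by
          apply mul_le_mul' htail
          apply ENNReal.ofReal_le_ofReal
          linarith
      _ ≤ (⨆ (m : ℕ) (_ : 3 ≤ m), seqMu m (Set.Ioi t)) * ENNReal.ofReal t := by
          refine mul_le_mul' ?_ le_rfl
          exact le_iSup₂ (f := fun (m : ℕ) (_ : 3 ≤ m) => seqMu m (Set.Ioi t)) (n + 3) (by omega)
  · -- part 5
    rintro ⟨ν, ⟨hp, hi⟩, hst⟩
    exact tail_false ν hp hi (fun n hn => upper_tail ν hp n hn (hst n hn))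
  · -- part 6
    rintro ⟨ν, ⟨hp, hi⟩, hst⟩
    haveI := hp
    set ν' : Measure ℝ := ν.map Neg.neg with hν'
    have hp' : IsProbabilityMeasure ν' :=
      Measure.isProbabilityMeasure_map measurable_neg.aemeasurable
    have hi' : Integrable (fun x : ℝ => x ^ 2) ν' := by
      rw [hν']
      rw [integrable_map_measure (by fun_prop) measurable_neg.aemeasurable]
      have hcomp : ((fun x : ℝ => x ^ 2) ∘ Neg.neg) = fun x : ℝ => x ^ 2 := by
        funext x; simp [Function.comp, neg_sq]
      rw [hcomp]
      exact hi
    apply tail_false ν' hp' hi'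
    intro n hn
    have hpre : Neg.neg ⁻¹' (Ici ((n:ℝ) - 1)) = Iic (-((n:ℝ) - 1)) := by
      ext x
      simp [le_neg]
    rw [hν', Measure.map_apply measurable_neg measurableSet_Ici, hpre]
    exact lower_tail ν hp n hn (hst n hn)
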